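/- The negation-left rule is admissible in cut-free lTS4: if the sequent Γ ⊢ Δ, α is provable in cut-free lTS4, then the sequent ¬α, Γ ⊢ Δ is provable in cut-free lTS4. -/

import Mathlib

inductive Fml : Type
  | var : ℕ → Fml
  | and : Fml → Fml → Fml
  | or  : Fml → Fml → Fml
  | imp : Fml → Fml → Fml
  | neg : Fml → Fml
  | box : Fml → Fml
  | dia : Fml → Fml
  deriving DecidableEq

open Fml

abbrev Ctx := Finset Fml

/-- □Γ -/
def boxS (Γ : Ctx) : Ctx := Γ.image Fml.box
/-- ◇Γ -/
def diaS (Γ : Ctx) : Ctx := Γ.image Fml.dia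
/-- ¬□Γ -/
def nboxS (Γ : Ctx) : Ctx := Γ.image (fun g => Fml.neg (Fml.box g))
/-- ¬◇Γ -/
def ndiaS (Γ : Ctx) : Ctx := Γ.image (fun g => Fml.neg (Fml.dia g))

/-- The twist sequent calculus lTS4; the Boolean index is `true` iff the cut rule is allowed.
    `lTS4 false` is the cut-free fragment. -/
inductive lTS4 : Bool → Ctx → Ctx → Prop
  | initV (c : Bool) (p : ℕ) : lTS4 c {var p} {var p}
  | initNV (c : Bool) (p : ℕ) : lTS4 c {neg (var p)} {neg (var p)}
  | initL (c : Bool) (p : ℕ) : lTS4 c {neg (var p), var p} ∅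
  | initR (c : Bool) (p : ℕ) : lTS4 c ∅ {neg (var p), var p}
  | cut (Γ Δ : Ctx) (α : Fml) :
      lTS4 true Γ {α} → lTS4 true (insert α Γ) Δ → lTS4 true Γ Δ
  | weL (c Γ Δ α) : lTS4 c Γ Δ → lTS4 c (insert α Γ) Δ
  | weR (c Γ Δ α) : lTS4 c Γ Δ → lTS4 c Γ (insert α Δ)
  | andL (c Γ Δ α β) : lTS4 c (insert α (insert β Γ)) Δ → lTS4 c (insert (α.and β) Γ) Δ
  | andR (c Γ Δ α β) : lTS4 c Γ (insert α Δ) → lTS4 c Γ (insert β Δ) →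
      lTS4 c Γ (insert (α.and β) Δ)
  | orL (c Γ Δ α β) : lTS4 c (insert α Γ) Δ → lTS4 c (insert β Γ) Δ →
      lTS4 c (insert (α.or β) Γ) Δ
  | orR (c Γ Δ α β) : lTS4 c Γ (insert α (insert β Δ)) → lTS4 c Γ (insert (α.or β) Δ)
  | impL (c Γ Δ α β) : lTS4 c Γ (insert α Δ) → lTS4 c (insert β Γ) Δ →
      lTS4 c (insert (α.imp β) Γ) Δ
  | impR (c Γ Δ α β) : lTS4 c (insert α Γ) (insert β Δ) → lTS4 c Γ (insert (α.imp β) Δ)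
  | boxL (c Γ Δ α) : lTS4 c (insert α Γ) Δ → lTS4 c (insert α.box Γ) Δ
  | boxR (c Γ₁ Γ₂ Δ₁ Δ₂ α) :
      lTS4 c (boxS Γ₁ ∪ ndiaS Γ₂) (insert α (diaS Δ₁ ∪ nboxS Δ₂)) →
      lTS4 c (boxS Γ₁ ∪ ndiaS Γ₂) (insert α.box (diaS Δ₁ ∪ nboxS Δ₂))
  | diaL (c Γ₁ Γ₂ Δ₁ Δ₂ α) :
      lTS4 c (insert α (boxS Γ₁ ∪ ndiaS Γ₂)) (diaS Δ₁ ∪ nboxS Δ₂) →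
      lTS4 c (insert α.dia (boxS Γ₁ ∪ ndiaS Γ₂)) (diaS Δ₁ ∪ nboxS Δ₂)
  | diaR (c Γ Δ α) : lTS4 c Γ (insert α Δ) → lTS4 c Γ (insert α.dia Δ)
  | nnL (c Γ Δ α) : lTS4 c (insert α Γ) Δ → lTS4 c (insert α.neg.neg Γ) Δ
  | nnR (c Γ Δ α) : lTS4 c Γ (insert α Δ) → lTS4 c Γ (insert α.neg.neg Δ)
  | nandL (c Γ Δ α β) : lTS4 c Γ (insert α Δ) → lTS4 c Γ (insert β Δ) →
      lTS4 c (insert (α.and β).neg Γ) Δ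
  | nandR (c Γ Δ α β) : lTS4 c (insert α (insert β Γ)) Δ → lTS4 c Γ (insert (α.and β).neg Δ)
  | norL (c Γ Δ α β) : lTS4 c Γ (insert α (insert β Δ)) → lTS4 c (insert (α.or β).neg Γ) Δ
  | norR (c Γ Δ α β) : lTS4 c (insert α Γ) Δ → lTS4 c (insert β Γ) Δ →
      lTS4 c Γ (insert (α.or β).neg Δ)
  | nimpL (c Γ Δ α β) : lTS4 c (insert α Γ) (insert β Δ) → lTS4 c (insert (α.imp β).neg Γ) Δ
  | nimpR (c Γ Δ α β) : lTS4 c Γ (insert α Δ) → lTS4 c (insert β Γ) Δ →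
      lTS4 c Γ (insert (α.imp β).neg Δ)
  | nboxL (c Γ₁ Γ₂ Δ₁ Δ₂ α) :
      lTS4 c (boxS Γ₁ ∪ ndiaS Γ₂) (insert α (diaS Δ₁ ∪ nboxS Δ₂)) →
      lTS4 c (insert α.box.neg (boxS Γ₁ ∪ ndiaS Γ₂)) (diaS Δ₁ ∪ nboxS Δ₂)
  | nboxR (c Γ Δ α) : lTS4 c (insert α Γ) Δ → lTS4 c Γ (insert α.box.neg Δ)
  | ndiaL (c Γ Δ α) : lTS4 c Γ (insert α Δ) → lTS4 c (insert α.dia.neg Γ) Δ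
  | ndiaR (c Γ₁ Γ₂ Δ₁ Δ₂ α) :
      lTS4 c (insert α (boxS Γ₁ ∪ ndiaS Γ₂)) (diaS Δ₁ ∪ nboxS Δ₂) →
      lTS4 c (boxS Γ₁ ∪ ndiaS Γ₂) (insert α.dia.neg (diaS Δ₁ ∪ nboxS Δ₂))


/-! Auxiliary material for stmt3 -/

/-- `nneg γ` is `φ` when `γ = ¬φ`, and `¬γ` otherwise. -/
def nneg : Fml → Fml
  | .neg φ => φ
  | φ => φ.neg

lemma weLU {c Γ Δ} (h : lTS4 c Γ Δ) (A : Ctx) : lTS4 c (A ∪ Γ) Δ := by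
  induction A using Finset.induction_on with
  | empty => simpa using h
  | insert _ _ _ ih => rw [Finset.insert_union]; exact lTS4.weL _ _ _ _ ih

lemma weRU {c Γ Δ} (h : lTS4 c Γ Δ) (A : Ctx) : lTS4 c Γ (A ∪ Δ) := by
  induction A using Finset.induction_on with
  | empty => simpa using h
  | insert _ _ _ ih => rw [Finset.insert_union]; exact lTS4.weR _ _ _ _ ih

lemma subW {c Γ Δ Γ' Δ'} (h : lTS4 c Γ Δ) (hΓ : Γ ⊆ Γ') (hΔ : Δ ⊆ Δ') :
    lTS4 c Γ' Δ' := by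
  have h1 : lTS4 c Γ' Δ := by
    have := weLU h (Γ' \ Γ); rwa [Finset.sdiff_union_of_subset hΓ] at this
  have := weRU h1 (Δ' \ Δ); rwa [Finset.sdiff_union_of_subset hΔ] at this

lemma nnegL {c Γ Δ} (γ : Fml) (h : lTS4 c (insert (nneg γ) Γ) Δ) :
    lTS4 c (insert γ.neg Γ) Δ := by
  cases γ with
  | neg φ => exact lTS4.nnL _ _ _ _ h
  | _ => exact h

lemma sdiff_ins (a : Fml) (Δ S : Ctx) : (insert a Δ) \ S ⊆ insert a (Δ \ S) := by
  intro x hx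
  simp only [Finset.mem_sdiff, Finset.mem_insert] at *
  tauto

lemma sdiff_ins2 (a b : Fml) (Δ S : Ctx) :
    (insert a (insert b Δ)) \ S ⊆ insert a (insert b (Δ \ S)) := by
  intro x hx
  simp only [Finset.mem_sdiff, Finset.mem_insert] at *
  tauto

/-- derived form of a right-rule IH -/
lemma ihR {c Γ} {a : Fml} {Δ : Ctx}
    (ih : ∀ S : Ctx, lTS4 c (Γ ∪ S.image nneg) ((insert a Δ) \ S)) (S : Ctx) :
    lTS4 c (Γ ∪ S.image nneg) (insert a (Δ \ S)) :=
  subW (ih S) (subset_refl _) (sdiff_ins a Δ S)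

lemma ihR2 {c Γ} {a b : Fml} {Δ : Ctx}
    (ih : ∀ S : Ctx, lTS4 c (Γ ∪ S.image nneg) ((insert a (insert b Δ)) \ S)) (S : Ctx) :
    lTS4 c (Γ ∪ S.image nneg) (insert a (insert b (Δ \ S))) :=
  subW (ih S) (subset_refl _) (sdiff_ins2 a b Δ S)

lemma modal_split (Γ₁ Γ₂ Δ₁ Δ₂ S : Ctx) :
    ∃ Γ₁' Γ₂' Δ₁' Δ₂' : Ctx,
      (boxS Γ₁ ∪ ndiaS Γ₂) ∪ (S ∩ (diaS Δ₁ ∪ nboxS Δ₂)).image nneg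
        = boxS Γ₁' ∪ ndiaS Γ₂' ∧
      (diaS Δ₁ ∪ nboxS Δ₂) \ S = diaS Δ₁' ∪ nboxS Δ₂' := by
  refine ⟨Γ₁ ∪ Δ₂.filter (fun δ => Fml.neg (Fml.box δ) ∈ S),
         Γ₂ ∪ Δ₁.filter (fun δ => Fml.dia δ ∈ S),
         Δ₁.filter (fun δ => Fml.dia δ ∉ S),
         Δ₂.filter (fun δ => Fml.neg (Fml.box δ) ∉ S), ?_, ?_⟩
  · ext x
    simp only [boxS, ndiaS, diaS, nboxS, Finset.mem_union, Finset.mem_image,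
      Finset.mem_inter, Finset.mem_filter]
    constructor
    · rintro ((⟨y, hy, rfl⟩ | ⟨y, hy, rfl⟩) | ⟨t, ⟨htS, (⟨y, hy, rfl⟩ | ⟨y, hy, rfl⟩)⟩, rfl⟩)
      · exact Or.inl ⟨y, Or.inl hy, rfl⟩
      · exact Or.inr ⟨y, Or.inl hy, rfl⟩
      · exact Or.inr ⟨y, Or.inr ⟨hy, htS⟩, rfl⟩
      · exact Or.inl ⟨y, Or.inr ⟨hy, htS⟩, rfl⟩
    · rintro (⟨y, (hy | ⟨hy, hS⟩), rfl⟩ | ⟨y, (hy | ⟨hy, hS⟩), rfl⟩)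
      · exact Or.inl (Or.inl ⟨y, hy, rfl⟩)
      · exact Or.inr ⟨Fml.neg (Fml.box y), ⟨hS, Or.inr ⟨y, hy, rfl⟩⟩, rfl⟩
      · exact Or.inl (Or.inr ⟨y, hy, rfl⟩)
      · exact Or.inr ⟨Fml.dia y, ⟨hS, Or.inl ⟨y, hy, rfl⟩⟩, rfl⟩
  · ext x
    simp only [diaS, nboxS, Finset.mem_union, Finset.mem_image, Finset.mem_sdiff,
      Finset.mem_filter]
    constructor
    · rintro ⟨(⟨y, hy, rfl⟩ | ⟨y, hy, rfl⟩), hxS⟩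
      · exact Or.inl ⟨y, ⟨hy, hxS⟩, rfl⟩
      · exact Or.inr ⟨y, ⟨hy, hxS⟩, rfl⟩
    · rintro (⟨y, ⟨hy, hS⟩, rfl⟩ | ⟨y, ⟨hy, hS⟩, rfl⟩)
      · exact ⟨Or.inl ⟨y, hy, rfl⟩, hS⟩
      · exact ⟨Or.inr ⟨y, hy, rfl⟩, hS⟩

lemma mainS {c Γ Δ} (h : lTS4 c Γ Δ) (S : Ctx) :
    lTS4 c (Γ ∪ S.image nneg) (Δ \ S) := by
  induction h generalizing S with
  | initV cb p =>
    by_cases hp : Fml.var p ∈ S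
    · rw [show ({Fml.var p} : Ctx) = insert (Fml.var p) ∅ from rfl,
        Finset.insert_sdiff_of_mem _ hp, Finset.empty_sdiff]
      refine subW (lTS4.initL cb p) ?_ (Finset.empty_subset _)
      have hm : Fml.neg (Fml.var p) ∈ S.image nneg := Finset.mem_image_of_mem nneg hp
      refine Finset.insert_subset (Finset.mem_union_right _ hm) ?_
      intro x hx
      rw [Finset.mem_singleton] at hx
      subst hx
      exact Finset.mem_union_left _ (Finset.mem_singleton_self _)
    · rw [show ({Fml.var p} : Ctx) = insert (Fml.var p) ∅ from rfl,
        Finset.insert_sdiff_of_notMem _ hp, Finset.empty_sdiff]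
      exact subW (lTS4.initV cb p) Finset.subset_union_left (subset_refl _)
  | initNV cb p =>
    by_cases hp : Fml.neg (Fml.var p) ∈ S
    · rw [show ({Fml.neg (Fml.var p)} : Ctx) = insert (Fml.neg (Fml.var p)) ∅ from rfl,
        Finset.insert_sdiff_of_mem _ hp, Finset.empty_sdiff]
      refine subW (lTS4.initL cb p) ?_ (Finset.empty_subset _)
      have hm : Fml.var p ∈ S.image nneg := Finset.mem_image_of_mem nneg hp
      refine Finset.insert_subset ?_ ?_
      · exact Finset.mem_union_left _ (Finset.mem_singleton_self _)
      · intro x hx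
        rw [Finset.mem_singleton] at hx
        subst hx
        exact Finset.mem_union_right _ hm
    · rw [show ({Fml.neg (Fml.var p)} : Ctx) = insert (Fml.neg (Fml.var p)) ∅ from rfl,
        Finset.insert_sdiff_of_notMem _ hp, Finset.empty_sdiff]
      exact subW (lTS4.initNV cb p) Finset.subset_union_left (subset_refl _)
  | initL cb p =>
    rw [Finset.empty_sdiff]
    exact subW (lTS4.initL cb p) Finset.subset_union_left (subset_refl _)
  | initR cb p =>
    have hset : ({Fml.neg (Fml.var p), Fml.var p} : Ctx)
        = insert (Fml.neg (Fml.var p)) (insert (Fml.var p) ∅) := rfl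
    by_cases hn : Fml.neg (Fml.var p) ∈ S <;> by_cases hp : Fml.var p ∈ S
    · rw [hset, Finset.insert_sdiff_of_mem _ hn, Finset.insert_sdiff_of_mem _ hp,
        Finset.empty_sdiff]
      refine subW (lTS4.initL cb p) ?_ (Finset.empty_subset _)
      have hm1 : Fml.var p ∈ S.image nneg := Finset.mem_image_of_mem nneg hn
      have hm2 : Fml.neg (Fml.var p) ∈ S.image nneg := Finset.mem_image_of_mem nneg hp
      refine Finset.insert_subset (Finset.mem_union_right _ hm2) ?_
      intro x hx
      rw [Finset.mem_singleton] at hx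
      subst hx
      exact Finset.mem_union_right _ hm1
    · rw [hset, Finset.insert_sdiff_of_mem _ hn, Finset.insert_sdiff_of_notMem _ hp,
        Finset.empty_sdiff]
      have hm : Fml.var p ∈ S.image nneg := Finset.mem_image_of_mem nneg hn
      refine subW (lTS4.initV cb p) ?_ (subset_refl _)
      intro x hx
      rw [Finset.mem_singleton] at hx
      subst hx
      exact Finset.mem_union_right _ hm
    · rw [hset, Finset.insert_sdiff_of_notMem _ hn, Finset.insert_sdiff_of_mem _ hp,
        Finset.empty_sdiff]
      have hm : Fml.neg (Fml.var p) ∈ S.image nneg := Finset.mem_image_of_mem nneg hp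
      refine subW (lTS4.initNV cb p) ?_ (subset_refl _)
      intro x hx
      rw [Finset.mem_singleton] at hx
      subst hx
      exact Finset.mem_union_right _ hm
    · rw [hset, Finset.insert_sdiff_of_notMem _ hn, Finset.insert_sdiff_of_notMem _ hp,
        Finset.empty_sdiff, ← hset]
      exact subW (lTS4.initR cb p) Finset.subset_union_left (subset_refl _)
  | cut Γ Δ α h1 h2 ih1 ih2 =>
    refine lTS4.cut _ _ α (subW h1 Finset.subset_union_left (subset_refl _)) ?_
    have h3 := ih2 S
    rwa [Finset.insert_union] at h3
  | weL cb Γ Δ α h ih =>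
    rw [Finset.insert_union]
    exact lTS4.weL _ _ _ _ (ih S)
  | weR cb Γ Δ α h ih =>
    by_cases hα : α ∈ S
    · rw [Finset.insert_sdiff_of_mem _ hα]
      exact ih S
    · rw [Finset.insert_sdiff_of_notMem _ hα]
      exact lTS4.weR _ _ _ _ (ih S)
  | andL cb Γ Δ α β h ih =>
    rw [Finset.insert_union]
    refine lTS4.andL _ _ _ _ _ ?_
    have h1 := ih S
    rwa [Finset.insert_union, Finset.insert_union] at h1
  | andR cb Γ Δ α β h1 h2 ih1 ih2 =>
    by_cases hc : α.and β ∈ S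
    · rw [Finset.insert_sdiff_of_mem _ hc]
      have h3 := lTS4.nandL cb (Γ ∪ S.image nneg) (Δ \ S) α β (ihR ih1 S) (ihR ih2 S)
      have hm : (α.and β).neg ∈ S.image nneg := Finset.mem_image_of_mem nneg hc
      rwa [Finset.insert_eq_self.2 (Finset.mem_union_right _ hm)] at h3
    · rw [Finset.insert_sdiff_of_notMem _ hc]
      exact lTS4.andR _ _ _ _ _ (ihR ih1 S) (ihR ih2 S)
  | orL cb Γ Δ α β h1 h2 ih1 ih2 =>
    rw [Finset.insert_union]
    have h3 := ih1 S
    have h4 := ih2 S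
    rw [Finset.insert_union] at h3 h4
    exact lTS4.orL _ _ _ _ _ h3 h4
  | orR cb Γ Δ α β h ih =>
    by_cases hc : α.or β ∈ S
    · rw [Finset.insert_sdiff_of_mem _ hc]
      have h3 := lTS4.norL cb (Γ ∪ S.image nneg) (Δ \ S) α β (ihR2 ih S)
      have hm : (α.or β).neg ∈ S.image nneg := Finset.mem_image_of_mem nneg hc
      rwa [Finset.insert_eq_self.2 (Finset.mem_union_right _ hm)] at h3
    · rw [Finset.insert_sdiff_of_notMem _ hc]
      exact lTS4.orR _ _ _ _ _ (ihR2 ih S)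
  | impL cb Γ Δ α β h1 h2 ih1 ih2 =>
    rw [Finset.insert_union]
    have h4 := ih2 S
    rw [Finset.insert_union] at h4
    exact lTS4.impL _ _ _ _ _ (ihR ih1 S) h4
  | impR cb Γ Δ α β h ih =>
    have h1 := ih S
    rw [Finset.insert_union] at h1
    have h2 := subW h1 (subset_refl _) (sdiff_ins β Δ S)
    by_cases hc : α.imp β ∈ S
    · rw [Finset.insert_sdiff_of_mem _ hc]
      have h3 := lTS4.nimpL cb (Γ ∪ S.image nneg) (Δ \ S) α β h2
      have hm : (α.imp β).neg ∈ S.image nneg := Finset.mem_image_of_mem nneg hc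
      rwa [Finset.insert_eq_self.2 (Finset.mem_union_right _ hm)] at h3
    · rw [Finset.insert_sdiff_of_notMem _ hc]
      exact lTS4.impR _ _ _ _ _ h2
  | boxL cb Γ Δ α h ih =>
    rw [Finset.insert_union]
    have h1 := ih S
    rw [Finset.insert_union] at h1
    exact lTS4.boxL _ _ _ _ h1
  | boxR cb Γ₁ Γ₂ Δ₁ Δ₂ α h ih =>
    obtain ⟨Γ₁', Γ₂', Δ₁', Δ₂', hL, hR⟩ := modal_split Γ₁ Γ₂ Δ₁ Δ₂ S
    have hDS : (diaS Δ₁ ∪ nboxS Δ₂) \ (S ∩ (diaS Δ₁ ∪ nboxS Δ₂))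
        = (diaS Δ₁ ∪ nboxS Δ₂) \ S := by
      ext x
      simp only [Finset.mem_sdiff, Finset.mem_inter]
      tauto
    have prem : lTS4 cb (boxS Γ₁' ∪ ndiaS Γ₂') (insert α (diaS Δ₁' ∪ nboxS Δ₂')) := by
      rw [← hL, ← hR]
      have h1 := subW (ih (S ∩ (diaS Δ₁ ∪ nboxS Δ₂))) (subset_refl _) (sdiff_ins α _ _)
      rwa [hDS] at h1
    have hmono : (boxS Γ₁ ∪ ndiaS Γ₂) ∪ (S ∩ (diaS Δ₁ ∪ nboxS Δ₂)).image nneg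
        ⊆ (boxS Γ₁ ∪ ndiaS Γ₂) ∪ S.image nneg :=
      Finset.union_subset_union_right (Finset.image_subset_image Finset.inter_subset_left)
    by_cases hc : α.box ∈ S
    · rw [Finset.insert_sdiff_of_mem _ hc]
      have h2 := lTS4.nboxL cb Γ₁' Γ₂' Δ₁' Δ₂' α prem
      rw [← hL, ← hR] at h2
      refine subW h2 ?_ (subset_refl _)
      have hm : α.box.neg ∈ S.image nneg := Finset.mem_image_of_mem nneg hc
      exact Finset.insert_subset (Finset.mem_union_right _ hm) hmono
    · rw [Finset.insert_sdiff_of_notMem _ hc]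
      have h2 := lTS4.boxR cb Γ₁' Γ₂' Δ₁' Δ₂' α prem
      rw [← hL, ← hR] at h2
      exact subW h2 hmono (subset_refl _)
  | diaL cb Γ₁ Γ₂ Δ₁ Δ₂ α h ih =>
    obtain ⟨Γ₁', Γ₂', Δ₁', Δ₂', hL, hR⟩ := modal_split Γ₁ Γ₂ Δ₁ Δ₂ S
    have hDS : (diaS Δ₁ ∪ nboxS Δ₂) \ (S ∩ (diaS Δ₁ ∪ nboxS Δ₂))
        = (diaS Δ₁ ∪ nboxS Δ₂) \ S := by
      ext x
      simp only [Finset.mem_sdiff, Finset.mem_inter]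
      tauto
    have hmono : (boxS Γ₁ ∪ ndiaS Γ₂) ∪ (S ∩ (diaS Δ₁ ∪ nboxS Δ₂)).image nneg
        ⊆ (boxS Γ₁ ∪ ndiaS Γ₂) ∪ S.image nneg :=
      Finset.union_subset_union_right (Finset.image_subset_image Finset.inter_subset_left)
    have prem : lTS4 cb (insert α (boxS Γ₁' ∪ ndiaS Γ₂')) (diaS Δ₁' ∪ nboxS Δ₂') := by
      rw [← hL, ← hR]
      have h1 := ih (S ∩ (diaS Δ₁ ∪ nboxS Δ₂))
      rwa [Finset.insert_union, hDS] at h1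
    have h2 := lTS4.diaL cb Γ₁' Γ₂' Δ₁' Δ₂' α prem
    rw [← hL, ← hR] at h2
    refine subW h2 ?_ (subset_refl _)
    rw [Finset.insert_union]
    exact Finset.insert_subset_insert _ hmono
  | diaR cb Γ Δ α h ih =>
    by_cases hc : α.dia ∈ S
    · rw [Finset.insert_sdiff_of_mem _ hc]
      have h3 := lTS4.ndiaL cb (Γ ∪ S.image nneg) (Δ \ S) α (ihR ih S)
      have hm : α.dia.neg ∈ S.image nneg := Finset.mem_image_of_mem nneg hc
      rwa [Finset.insert_eq_self.2 (Finset.mem_union_right _ hm)] at h3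
    · rw [Finset.insert_sdiff_of_notMem _ hc]
      exact lTS4.diaR _ _ _ _ (ihR ih S)
  | nnL cb Γ Δ α h ih =>
    rw [Finset.insert_union]
    have h1 := ih S
    rw [Finset.insert_union] at h1
    exact lTS4.nnL _ _ _ _ h1
  | nnR cb Γ Δ α h ih =>
    by_cases hc : α.neg.neg ∈ S
    · rw [Finset.insert_sdiff_of_mem _ hc]
      have h1 := ih (insert α S)
      rw [Finset.image_insert, Finset.union_insert] at h1
      have h2 := nnegL α h1
      have hm : α.neg ∈ S.image nneg := Finset.mem_image_of_mem nneg hc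
      rw [Finset.insert_eq_self.2 (Finset.mem_union_right _ hm)] at h2
      refine subW h2 (subset_refl _) ?_
      intro x hx
      simp only [Finset.mem_sdiff, Finset.mem_insert] at *
      tauto
    · rw [Finset.insert_sdiff_of_notMem _ hc]
      exact lTS4.nnR _ _ _ _ (ihR ih S)
  | nandL cb Γ Δ α β h1 h2 ih1 ih2 =>
    rw [Finset.insert_union]
    exact lTS4.nandL _ _ _ _ _ (ihR ih1 S) (ihR ih2 S)
  | nandR cb Γ Δ α β h ih =>
    have h1 := ih S
    rw [Finset.insert_union, Finset.insert_union] at h1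
    by_cases hc : (α.and β).neg ∈ S
    · rw [Finset.insert_sdiff_of_mem _ hc]
      have h3 := lTS4.andL cb (Γ ∪ S.image nneg) (Δ \ S) α β h1
      have hm : α.and β ∈ S.image nneg := Finset.mem_image_of_mem nneg hc
      rwa [Finset.insert_eq_self.2 (Finset.mem_union_right _ hm)] at h3
    · rw [Finset.insert_sdiff_of_notMem _ hc]
      exact lTS4.nandR _ _ _ _ _ h1
  | norL cb Γ Δ α β h ih =>
    rw [Finset.insert_union]
    exact lTS4.norL _ _ _ _ _ (ihR2 ih S)
  | norR cb Γ Δ α β h1 h2 ih1 ih2 =>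
    have h3 := ih1 S
    have h4 := ih2 S
    rw [Finset.insert_union] at h3 h4
    by_cases hc : (α.or β).neg ∈ S
    · rw [Finset.insert_sdiff_of_mem _ hc]
      have h5 := lTS4.orL cb (Γ ∪ S.image nneg) (Δ \ S) α β h3 h4
      have hm : α.or β ∈ S.image nneg := Finset.mem_image_of_mem nneg hc
      rwa [Finset.insert_eq_self.2 (Finset.mem_union_right _ hm)] at h5
    · rw [Finset.insert_sdiff_of_notMem _ hc]
      exact lTS4.norR _ _ _ _ _ h3 h4
  | nimpL cb Γ Δ α β h ih =>
    rw [Finset.insert_union]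
    have h1 := ih S
    rw [Finset.insert_union] at h1
    exact lTS4.nimpL _ _ _ _ _ (subW h1 (subset_refl _) (sdiff_ins β Δ S))
  | nimpR cb Γ Δ α β h1 h2 ih1 ih2 =>
    have h4 := ih2 S
    rw [Finset.insert_union] at h4
    by_cases hc : (α.imp β).neg ∈ S
    · rw [Finset.insert_sdiff_of_mem _ hc]
      have h5 := lTS4.impL cb (Γ ∪ S.image nneg) (Δ \ S) α β (ihR ih1 S) h4
      have hm : α.imp β ∈ S.image nneg := Finset.mem_image_of_mem nneg hc
      rwa [Finset.insert_eq_self.2 (Finset.mem_union_right _ hm)] at h5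
    · rw [Finset.insert_sdiff_of_notMem _ hc]
      exact lTS4.nimpR _ _ _ _ _ (ihR ih1 S) h4
  | nboxL cb Γ₁ Γ₂ Δ₁ Δ₂ α h ih =>
    obtain ⟨Γ₁', Γ₂', Δ₁', Δ₂', hL, hR⟩ := modal_split Γ₁ Γ₂ Δ₁ Δ₂ S
    have hDS : (diaS Δ₁ ∪ nboxS Δ₂) \ (S ∩ (diaS Δ₁ ∪ nboxS Δ₂))
        = (diaS Δ₁ ∪ nboxS Δ₂) \ S := by
      ext x
      simp only [Finset.mem_sdiff, Finset.mem_inter]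
      tauto
    have hmono : (boxS Γ₁ ∪ ndiaS Γ₂) ∪ (S ∩ (diaS Δ₁ ∪ nboxS Δ₂)).image nneg
        ⊆ (boxS Γ₁ ∪ ndiaS Γ₂) ∪ S.image nneg :=
      Finset.union_subset_union_right (Finset.image_subset_image Finset.inter_subset_left)
    have prem : lTS4 cb (boxS Γ₁' ∪ ndiaS Γ₂') (insert α (diaS Δ₁' ∪ nboxS Δ₂')) := by
      rw [← hL, ← hR]
      have h1 := subW (ih (S ∩ (diaS Δ₁ ∪ nboxS Δ₂))) (subset_refl _) (sdiff_ins α _ _)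
      rwa [hDS] at h1
    have h2 := lTS4.nboxL cb Γ₁' Γ₂' Δ₁' Δ₂' α prem
    rw [← hL, ← hR] at h2
    refine subW h2 ?_ (subset_refl _)
    rw [Finset.insert_union]
    exact Finset.insert_subset_insert _ hmono
  | nboxR cb Γ Δ α h ih =>
    have h1 := ih S
    rw [Finset.insert_union] at h1
    by_cases hc : α.box.neg ∈ S
    · rw [Finset.insert_sdiff_of_mem _ hc]
      have h3 := lTS4.boxL cb (Γ ∪ S.image nneg) (Δ \ S) α h1
      have hm : α.box ∈ S.image nneg := Finset.mem_image_of_mem nneg hc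
      rwa [Finset.insert_eq_self.2 (Finset.mem_union_right _ hm)] at h3
    · rw [Finset.insert_sdiff_of_notMem _ hc]
      exact lTS4.nboxR _ _ _ _ h1
  | ndiaL cb Γ Δ α h ih =>
    rw [Finset.insert_union]
    exact lTS4.ndiaL _ _ _ _ (ihR ih S)
  | ndiaR cb Γ₁ Γ₂ Δ₁ Δ₂ α h ih =>
    obtain ⟨Γ₁', Γ₂', Δ₁', Δ₂', hL, hR⟩ := modal_split Γ₁ Γ₂ Δ₁ Δ₂ S
    have hDS : (diaS Δ₁ ∪ nboxS Δ₂) \ (S ∩ (diaS Δ₁ ∪ nboxS Δ₂))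
        = (diaS Δ₁ ∪ nboxS Δ₂) \ S := by
      ext x
      simp only [Finset.mem_sdiff, Finset.mem_inter]
      tauto
    have hmono : (boxS Γ₁ ∪ ndiaS Γ₂) ∪ (S ∩ (diaS Δ₁ ∪ nboxS Δ₂)).image nneg
        ⊆ (boxS Γ₁ ∪ ndiaS Γ₂) ∪ S.image nneg :=
      Finset.union_subset_union_right (Finset.image_subset_image Finset.inter_subset_left)
    have prem : lTS4 cb (insert α (boxS Γ₁' ∪ ndiaS Γ₂')) (diaS Δ₁' ∪ nboxS Δ₂') := by
      rw [← hL, ← hR]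
      have h1 := ih (S ∩ (diaS Δ₁ ∪ nboxS Δ₂))
      rwa [Finset.insert_union, hDS] at h1
    by_cases hc : α.dia.neg ∈ S
    · rw [Finset.insert_sdiff_of_mem _ hc]
      have h2 := lTS4.diaL cb Γ₁' Γ₂' Δ₁' Δ₂' α prem
      rw [← hL, ← hR] at h2
      refine subW h2 ?_ (subset_refl _)
      have hm : α.dia ∈ S.image nneg := Finset.mem_image_of_mem nneg hc
      exact Finset.insert_subset (Finset.mem_union_right _ hm) hmono
    · rw [Finset.insert_sdiff_of_notMem _ hc]
      have h2 := lTS4.ndiaR cb Γ₁' Γ₂' Δ₁' Δ₂' α prem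
      rw [← hL, ← hR] at h2
      exact subW h2 hmono (subset_refl _)

theorem stmt3' (Γ Δ : Ctx) (α : Fml) (h : lTS4 false Γ (insert α Δ)) :
    lTS4 false (insert α.neg Γ) Δ := by
  have h1 := mainS h {α}
  rw [Finset.image_singleton] at h1
  have h2 : lTS4 false (insert (nneg α) Γ) Δ := by
    refine subW h1 ?_ ?_
    · intro x hx
      rcases Finset.mem_union.1 hx with hx | hx
      · exact Finset.mem_insert_of_mem hx
      · rw [Finset.mem_singleton] at hx
        subst hx
        exact Finset.mem_insert_self _ _
    · intro x hx
      simp only [Finset.mem_sdiff, Finset.mem_insert, Finset.mem_singleton] at hx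
      tauto
  exact nnegL α h2

/-- (¬left) is admissible in cut-free lTS4. -/
theorem stmt3 (Γ Δ : Ctx) (α : Fml) (h : lTS4 false Γ (insert α Δ)) :
    lTS4 false (insert α.neg Γ) Δ := stmt3' Γ Δ α h
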